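/- Suppose 0 < Δ_kl and Δ_ij > (1+ε)·Δ_kl with ε > e^{1/16} − 1, let b = (1 + e^{1/16} + ε)/(1 − e^{1/16} + ε), R ≥ Δ_ij, C ≥ 1, and set D₁ = 2(b+1)²R²/Δ_ij², D₂' = 2(b−1)²R²/Δ_kl². Then 4D₂'·log(2D₂'√C) − 3 > 4D₁·log(2D₁√C) + 1. -/
import Mathlib

lemma key_xy (y x c : ℝ) (hy : 8 < y) (hx : y * Real.exp (1/8) ≤ x) (hc : 1 ≤ c) :
    x * Real.log (2*x*c) - y * Real.log (2*y*c) > 1 := by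
  have hE : 1 + (1/8 : ℝ) ≤ Real.exp (1/8) := by
    have := Real.add_one_le_exp (1/8 : ℝ); linarith
  have hy0 : (0:ℝ) < y := by linarith
  have hx0 : 0 < x := by nlinarith
  have hyc : (16:ℝ) < 2*y*c := by nlinarith
  have hyc0 : (0:ℝ) < 2*y*c := by linarith
  have hxc : 2*y*c*Real.exp (1/8) ≤ 2*x*c := by nlinarith [Real.exp_pos (1/8 : ℝ)]
  have hL : 2 < Real.log (2*y*c) := by
    have h2 : Real.exp 2 = Real.exp 1 * Real.exp 1 := by
      rw [← Real.exp_add]; norm_num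
    have he := Real.exp_one_lt_d9
    have : Real.exp 2 < 2*y*c := by nlinarith [Real.exp_pos 1]
    exact (Real.lt_log_iff_exp_lt hyc0).mpr this
  have hlog : Real.log (2*y*c) + 1/8 ≤ Real.log (2*x*c) := by
    have h := Real.log_le_log (by positivity) hxc
    rwa [Real.log_mul (by positivity) (Real.exp_ne_zero _), Real.log_exp] at h
  set L := Real.log (2*y*c) with hLdef
  have h1 : x * (L + 1/8) ≤ x * Real.log (2*x*c) :=
    mul_le_mul_of_nonneg_left hlog (le_of_lt hx0)
  nlinarith [mul_nonneg (by nlinarith : (0:ℝ) ≤ x - y * Real.exp (1/8)) (by nlinarith : (0:ℝ) ≤ L + 1/8),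
    mul_nonneg (by linarith : (0:ℝ) ≤ y - 8) (by nlinarith : (0:ℝ) ≤ (Real.exp (1/8) - 1) * L + Real.exp (1/8) * (1/8)),
    mul_pos hy0 (by nlinarith : (0:ℝ) < (Real.exp (1/8) - 1) * (L - 2))]

theorem splitting_order (ε b R C Δkl Δij : ℝ)
    (hkl : 0 < Δkl) (hgap : Δij > (1 + ε) * Δkl)
    (hε : ε > Real.exp (1 / 16) - 1)
    (hb : b = (1 + Real.exp (1 / 16) + ε) / (1 - Real.exp (1 / 16) + ε))
    (hR : R ≥ Δij) (hC : 1 ≤ C) :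
    4 * (2 * (b - 1) ^ 2 * R ^ 2 / Δkl ^ 2) *
        Real.log (2 * (2 * (b - 1) ^ 2 * R ^ 2 / Δkl ^ 2) * Real.sqrt C) - 3 >
      4 * (2 * (b + 1) ^ 2 * R ^ 2 / Δij ^ 2) *
        Real.log (2 * (2 * (b + 1) ^ 2 * R ^ 2 / Δij ^ 2) * Real.sqrt C) + 1 := by
  set e := Real.exp (1/16) with he
  have he1 : 1 < e := by
    have := Real.add_one_le_exp (1/16 : ℝ); rw [he]; linarith
  have hd : 0 < 1 - e + ε := by linarith
  have hb1 : 1 < b := by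
    rw [hb]
    rw [lt_div_iff₀ hd]; linarith
  have hεpos : 0 < 1 + ε := by linarith
  have hij : 0 < Δij := by nlinarith
  have hR0 : 0 < R := lt_of_lt_of_le hij hR
  have hc : 1 ≤ Real.sqrt C := by
    rw [show (1:ℝ) = Real.sqrt 1 from (Real.sqrt_one).symm]
    exact Real.sqrt_le_sqrt hC
  -- key identity: (b-1)*(1+ε) = e*(b+1)
  have hid : (b - 1) * (1 + ε) = e * (b + 1) := by
    rw [hb]; field_simp; ring
  have hE8 : Real.exp (1/8) = e * e := by
    rw [he, ← Real.exp_add]; norm_num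
  set D1 := 2 * (b + 1) ^ 2 * R ^ 2 / Δij ^ 2 with hD1
  set D2 := 2 * (b - 1) ^ 2 * R ^ 2 / Δkl ^ 2 with hD2
  have hRsq : Δij^2 ≤ R^2 := by nlinarith
  have hb2 : (4:ℝ) < (b+1)^2 := by nlinarith
  have hD1gt : 8 < D1 := by
    rw [hD1, lt_div_iff₀ (by positivity)]
    nlinarith [mul_lt_mul_of_pos_right hb2 (pow_pos hij 2),
      mul_le_mul_of_nonneg_left hRsq (by positivity : (0:ℝ) ≤ 2*(b+1)^2)]
  have hDs : D1 * Real.exp (1/8) ≤ D2 := by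
    have hsq : ((1+ε)*Δkl)^2 ≤ Δij^2 :=
      pow_le_pow_left₀ (le_of_lt (mul_pos hεpos hkl)) (le_of_lt hgap) 2
    have h1 : (b-1)^2 * ((1+ε)*Δkl)^2 ≤ (b-1)^2 * Δij^2 :=
      mul_le_mul_of_nonneg_left hsq (sq_nonneg _)
    have h2 : (b-1)^2 * ((1+ε)*Δkl)^2 = e^2 * (b+1)^2 * Δkl^2 := by
      have : (b-1)^2 * ((1+ε)*Δkl)^2 = ((b-1)*(1+ε))^2 * Δkl^2 := by ring
      rw [this, hid]; ring
    have hkey : e^2 * (b+1)^2 * Δkl^2 ≤ (b-1)^2 * Δij^2 := by rw [← h2]; exact h1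
    rw [hD1, hD2, hE8, div_mul_eq_mul_div, div_le_div_iff₀ (by positivity) (by positivity)]
    nlinarith [mul_le_mul_of_nonneg_left hkey (by positivity : (0:ℝ) ≤ 2*R^2)]
  have := key_xy D1 D2 (Real.sqrt C) hD1gt hDs hc
  linarith
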